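/- For real numbers s_1, …, s_k in [1/2, 1) with geometric mean ŝ = (∏ s_i)^{1/k}, we have ∑_{i=1}^k (1 − s_i)·ln(s_i/(1 − s_i)) ≤ k·(1 − ŝ)·ln(ŝ/(1 − ŝ)). -/

import Mathlib

open Real Finset

/-- Jensen-type inequality for `(1 − s)·ln(s/(1 − s))` with the
geometric mean `ŝ = (∏ s_i)^{1/k}`. -/
noncomputable def F (x : ℝ) : ℝ := (1 - exp x) * (x - log (1 - exp x))
noncomputable def F1 (x : ℝ) : ℝ := 1 - exp x * (x - log (1 - exp x))
noncomputable def F2 (x : ℝ) : ℝ := -exp x * (x - log (1 - exp x) + 1 / (1 - exp x))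

lemma hasDerivAt_F {x : ℝ} (hx : x < 0) : HasDerivAt F (F1 x) x := by
  have he : exp x < 1 := by simpa using Real.exp_lt_one_iff.mpr hx
  have hne : 1 - exp x ≠ 0 := by linarith
  have h1 : HasDerivAt (fun x => 1 - exp x) (-exp x) x := by
    have h := (hasDerivAt_const x (1:ℝ)).sub (Real.hasDerivAt_exp x)
    rwa [zero_sub] at h
  have hlog : HasDerivAt (fun x => log (1 - exp x)) (-exp x / (1 - exp x)) x :=
    h1.log hne
  have h2 : HasDerivAt (fun x => x - log (1 - exp x)) (1 - (-exp x / (1 - exp x))) x :=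
    (hasDerivAt_id x).sub hlog
  have := h1.mul h2
  refine this.congr_deriv ?_
  unfold F1
  field_simp
  ring

lemma hasDerivAt_F1 {x : ℝ} (hx : x < 0) : HasDerivAt F1 (F2 x) x := by
  have he : exp x < 1 := by simpa using Real.exp_lt_one_iff.mpr hx
  have hne : 1 - exp x ≠ 0 := by linarith
  have h1 : HasDerivAt (fun x => 1 - exp x) (-exp x) x := by
    have h := (hasDerivAt_const x (1:ℝ)).sub (Real.hasDerivAt_exp x)
    rwa [zero_sub] at h
  have hlog : HasDerivAt (fun x => log (1 - exp x)) (-exp x / (1 - exp x)) x :=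
    h1.log hne
  have h2 : HasDerivAt (fun x => x - log (1 - exp x)) (1 - (-exp x / (1 - exp x))) x :=
    (hasDerivAt_id x).sub hlog
  have hm := (Real.hasDerivAt_exp x).mul h2
  have : HasDerivAt F1 (-(exp x * (x - log (1 - exp x)) + exp x * (1 - -exp x / (1 - exp x)))) x := by
    have h := (hasDerivAt_const x (1:ℝ)).sub hm
    rw [zero_sub] at h
    exact h
  convert this using 1
  unfold F2
  field_simp
  ring

lemma concaveF : ConcaveOn ℝ (Set.Ico (-log 2) 0) F := by
  have hD : Convex ℝ (Set.Ico (-log 2) (0:ℝ)) := convex_Ico _ _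
  have hint : interior (Set.Ico (-log 2) (0:ℝ)) = Set.Ioo (-log 2) 0 := interior_Ico
  refine concaveOn_of_hasDerivWithinAt2_nonpos hD (f' := F1) (f'' := F2) ?_ ?_ ?_ ?_
  · intro x hx
    have hx0 : x < 0 := hx.2
    exact (hasDerivAt_F hx0).continuousAt.continuousWithinAt
  · intro x hx
    rw [hint] at hx
    exact (hasDerivAt_F hx.2).hasDerivWithinAt
  · intro x hx
    rw [hint] at hx
    exact (hasDerivAt_F1 hx.2).hasDerivWithinAt
  · intro x hx
    rw [hint] at hx
    obtain ⟨hxl, hxr⟩ := hx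
    have he : exp x < 1 := Real.exp_lt_one_iff.mpr hxr
    have he2 : (1:ℝ)/2 ≤ exp x := by
      have : exp (-log 2) ≤ exp x := Real.exp_le_exp.mpr hxl.le
      rwa [Real.exp_neg, Real.exp_log (by norm_num : (0:ℝ) < 2), ← one_div] at this
    have hpos : 0 < 1 - exp x := by linarith
    have hlog : log (1 - exp x) ≤ x := by
      calc log (1 - exp x) ≤ log (1/2) := Real.log_le_log (by linarith) (by linarith)
        _ = -log 2 := by rw [one_div, Real.log_inv]
        _ ≤ x := hxl.le
    unfold F2
    have hd : 0 < 1 / (1 - exp x) := by positivity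
    have h1 : 0 ≤ x - log (1 - exp x) + 1 / (1 - exp x) := by linarith
    have h2 : 0 < exp x := Real.exp_pos x
    nlinarith

theorem jensen_geometric_mean (k : ℕ) (hk : 1 ≤ k) (s : Fin k → ℝ)
    (hs1 : ∀ i, 1 / 2 ≤ s i) (hs2 : ∀ i, s i < 1) :
    ∑ i, (1 - s i) * Real.log (s i / (1 - s i)) ≤
      (k : ℝ) * (1 - (∏ i, s i) ^ ((1 : ℝ) / k)) *
        Real.log ((∏ i, s i) ^ ((1 : ℝ) / k) / (1 - (∏ i, s i) ^ ((1 : ℝ) / k))) := by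
  have hk0 : (0:ℝ) < k := by exact_mod_cast hk
  have hpos : ∀ i, 0 < s i := fun i => lt_of_lt_of_le (by norm_num) (hs1 i)
  have hP : 0 < ∏ i, s i := Finset.prod_pos (fun i _ => hpos i)
  set σ : ℝ := (∏ i, s i) ^ ((1 : ℝ) / k) with hσdef
  have hσpos : 0 < σ := Real.rpow_pos_of_pos hP _
  have hLmem : ∀ i, log (s i) ∈ Set.Ico (-log 2) (0:ℝ) := by
    intro i
    constructor
    · have := Real.log_le_log (by norm_num : (0:ℝ) < 1/2) (hs1 i)
      rwa [one_div, Real.log_inv] at this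
    · exact Real.log_neg (hpos i) (hs2 i)
  have hlogσ : log σ = ∑ i, ((k:ℝ)⁻¹) • log (s i) := by
    rw [hσdef, Real.log_rpow hP, Real.log_prod (fun i _ => (hpos i).ne')]
    rw [← Finset.smul_sum]
    simp [smul_eq_mul, one_div]
  have hσlt1 : σ < 1 := by
    have hsum : ∑ i, ((k:ℝ)⁻¹) • log (s i) < 0 := by
      apply Finset.sum_neg
      · intro i _
        exact mul_neg_of_pos_of_neg (by positivity) (hLmem i).2
      · exact Finset.univ_nonempty_iff.mpr (Fin.pos_iff_nonempty.mp hk)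
    have : log σ < 0 := hlogσ ▸ hsum
    calc σ = exp (log σ) := (Real.exp_log hσpos).symm
      _ < 1 := Real.exp_lt_one_iff.mpr this
  have hFval : ∀ t : ℝ, 0 < t → t < 1 → F (log t) = (1 - t) * log (t / (1 - t)) := by
    intro t ht ht1
    unfold F
    rw [Real.exp_log ht, Real.log_div ht.ne' (show (1:ℝ) - t ≠ 0 by linarith)]
  have hjensen := concaveF.le_map_sum (t := Finset.univ) (w := fun _ : Fin k => (k:ℝ)⁻¹)
    (p := fun i => log (s i)) (fun i _ => by positivity)
    (by simp [Finset.sum_const]; field_simp) (fun i _ => hLmem i)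
  rw [← hlogσ] at hjensen
  have hF : ∀ i, F (log (s i)) = (1 - s i) * log (s i / (1 - s i)) :=
    fun i => hFval _ (hpos i) (hs2 i)
  have hFσ : F (log σ) = (1 - σ) * log (σ / (1 - σ)) := hFval _ hσpos hσlt1
  have hlhs : ∑ i, ((k:ℝ)⁻¹) • F (log (s i))
      = (k:ℝ)⁻¹ * ∑ i, (1 - s i) * log (s i / (1 - s i)) := by
    simp only [smul_eq_mul]
    rw [← Finset.mul_sum]
    congr 1
    exact Finset.sum_congr rfl (fun i _ => by rw [hF i])
  rw [hlhs, hFσ] at hjensen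
  rw [mul_assoc]
  calc ∑ i, (1 - s i) * log (s i / (1 - s i))
      = (k:ℝ) * ((k:ℝ)⁻¹ * ∑ i, (1 - s i) * log (s i / (1 - s i))) := by
        field_simp
    _ ≤ (k:ℝ) * ((1 - σ) * log (σ / (1 - σ))) := by
        exact mul_le_mul_of_nonneg_left hjensen hk0.le
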